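/- Let Ω ⊂ ℝ^d be bounded open, θ ∈ S^{d-1}, and let μ_θ(A) = ∫_Ω χ_A(Φ_θ(x)) dx be the directional measure. Let A be a nonempty Borel subset of ∂_θΩ. Then μ_θ(A) > 0 if and only if the orthogonal projection P_θ(A) onto the hyperplane H_θ orthogonal to θ has positive (d-1)-dimensional Lebesgue measure. -/

import Mathlib

open Set MeasureTheory
open scoped ENNReal NNReal

/-- The directional exit length `δ_θ(x) = sup {s ≥ 0 : ∀ t ∈ [0,s[, x + tθ ∈ Ω}`. -/
noncomputable def deltaDir {d : ℕ} (Ω : Set (EuclideanSpace ℝ (Fin d)))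
    (θ x : EuclideanSpace ℝ (Fin d)) : ℝ :=
  sSup {s : ℝ | 0 ≤ s ∧ ∀ t ∈ Set.Ico (0 : ℝ) s, x + t • θ ∈ Ω}

/-- `Φ_θ(x) = x + δ_θ(x) θ`. -/
noncomputable def PhiDir {d : ℕ} (Ω : Set (EuclideanSpace ℝ (Fin d)))
    (θ x : EuclideanSpace ℝ (Fin d)) : EuclideanSpace ℝ (Fin d) :=
  x + deltaDir Ω θ x • θ

namespace Stmt16Aux

def dirSet {d : ℕ} (Ω : Set (EuclideanSpace ℝ (Fin d)))
    (θ x : EuclideanSpace ℝ (Fin d)) : Set ℝ :=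
  {s : ℝ | 0 ≤ s ∧ ∀ t ∈ Set.Ico (0 : ℝ) s, x + t • θ ∈ Ω}

lemma deltaDir_eq {d : ℕ} (Ω : Set (EuclideanSpace ℝ (Fin d)))
    (θ x : EuclideanSpace ℝ (Fin d)) : deltaDir Ω θ x = sSup (dirSet Ω θ x) := rfl

lemma zero_mem_dirSet {d : ℕ} (Ω : Set (EuclideanSpace ℝ (Fin d)))
    (θ x : EuclideanSpace ℝ (Fin d)) : (0:ℝ) ∈ dirSet Ω θ x :=
  ⟨le_refl 0, fun t ht => absurd ht (by simp)⟩

/-- Key computation: the exit map sends `z - t•θ` to `z` when `z` is a frontier point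
accessible from direction `θ`. -/
lemma PhiDir_sub_smul {d : ℕ} {Ω : Set (EuclideanSpace ℝ (Fin d))} (hΩ : IsOpen Ω)
    {θ z : EuclideanSpace ℝ (Fin d)} (hz : z ∈ frontier Ω) {r : ℝ}
    (hseg : ∀ t ∈ Set.Ioo (0:ℝ) r, z - t • θ ∈ Ω) {t : ℝ} (ht : t ∈ Set.Ioo (0:ℝ) r) :
    deltaDir Ω θ (z - t • θ) = t ∧ PhiDir Ω θ (z - t • θ) = z := by
  have hzΩ : z ∉ Ω := by
    rw [hΩ.frontier_eq] at hz
    exact hz.2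
  have hmem : t ∈ dirSet Ω θ (z - t • θ) := by
    refine ⟨le_of_lt ht.1, fun u hu => ?_⟩
    have : z - t • θ + u • θ = z - (t - u) • θ := by
      rw [sub_smul]; abel
    rw [this]
    exact hseg _ ⟨by linarith [hu.1, hu.2], by linarith [hu.1, hu.2, ht.2]⟩
  have hub : ∀ s ∈ dirSet Ω θ (z - t • θ), s ≤ t := by
    intro s hs
    by_contra hst
    push_neg at hst
    have := hs.2 t ⟨le_of_lt ht.1, hst⟩
    rw [sub_add_cancel] at this
    exact hzΩ this
  have hδ : deltaDir Ω θ (z - t • θ) = t := by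
    rw [deltaDir_eq]
    exact IsGreatest.csSup_eq ⟨hmem, hub⟩
  refine ⟨hδ, ?_⟩
  rw [PhiDir, hδ, sub_add_cancel]

lemma dirSet_bddAbove {d : ℕ} {Ω : Set (EuclideanSpace ℝ (Fin d))}
    (hb : Bornology.IsBounded Ω) {θ : EuclideanSpace ℝ (Fin d)} (hθ : ‖θ‖ = 1) :
    ∃ M : ℝ, ∀ x, ∀ s ∈ dirSet Ω θ x, s ≤ M := by
  obtain ⟨R, hR⟩ := hb.subset_ball 0
  have hR' : Ω ⊆ Metric.ball 0 (|R| + 1) :=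
    hR.trans (Metric.ball_subset_ball (by cases abs_cases R <;> linarith))
  set R' := |R| + 1 with hR'def
  have hR'pos : 0 < R' := by positivity
  refine ⟨2 * R' + 1, fun x s hs => ?_⟩
  by_contra h
  push_neg at h
  have h0 : (0:ℝ) < s := by linarith
  have hx : x ∈ Ω := by simpa using hs.2 0 ⟨le_refl 0, h0⟩
  have ht : x + (2 * R' + 1) • θ ∈ Ω := hs.2 _ ⟨by positivity, h⟩
  have h1 : ‖x‖ < R' := by simpa using hR' hx
  have h2 : ‖x + (2 * R' + 1) • θ‖ < R' := by simpa using hR' ht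
  have h3 : ‖(2 * R' + 1) • θ‖ ≤ ‖x + (2 * R' + 1) • θ‖ + ‖x‖ := by
    have := norm_sub_le (x + (2 * R' + 1) • θ) x
    simpa using this
  have h4 : ‖(2 * R' + 1) • θ‖ = 2 * R' + 1 := by
    rw [norm_smul, hθ, Real.norm_eq_abs, abs_of_pos (by positivity), mul_one]
  linarith

lemma measurable_deltaDir {d : ℕ} {Ω : Set (EuclideanSpace ℝ (Fin d))}
    (hΩ : IsOpen Ω) (hb : Bornology.IsBounded Ω) {θ : EuclideanSpace ℝ (Fin d)}
    (hθ : ‖θ‖ = 1) : Measurable (deltaDir Ω θ) := by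
  obtain ⟨M, hM⟩ := dirSet_bddAbove hb hθ
  have hbdd : ∀ x, BddAbove (dirSet Ω θ x) := fun x => ⟨M, fun s hs => hM x s hs⟩
  have hnonneg : ∀ x, 0 ≤ deltaDir Ω θ x := fun x =>
    le_csSup (hbdd x) (zero_mem_dirSet Ω θ x)
  apply measurable_of_Ioi
  intro c
  have hopen : IsOpen {x | c < deltaDir Ω θ x} := by
    rcases lt_or_ge c 0 with hc | hc
    · have : {x | c < deltaDir Ω θ x} = univ := eq_univ_of_forall fun x =>
        lt_of_lt_of_le hc (hnonneg x)
      rw [this]; exact isOpen_univ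
    · rw [Metric.isOpen_iff]
      intro x hx
      obtain ⟨s, hsmem, hcs⟩ := exists_lt_of_lt_csSup ⟨0, zero_mem_dirSet Ω θ x⟩ hx
      set s₀ := (c + s) / 2 with hs₀def
      have hs₀pos : 0 ≤ s₀ := by simp only [hs₀def]; linarith
      have hs₀lt : s₀ < s := by linarith
      have hcs₀ : c < s₀ := by linarith
      set K := (fun t : ℝ => x + t • θ) '' Icc 0 s₀ with hKdef
      have hKcpt : IsCompact K := (isCompact_Icc).image (by fun_prop)
      have hKΩ : K ⊆ Ω := by
        rintro _ ⟨t, htmem, rfl⟩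
        exact hsmem.2 t ⟨htmem.1, lt_of_le_of_lt htmem.2 hs₀lt⟩
      obtain ⟨ε, hεpos, hε⟩ := hKcpt.exists_thickening_subset_open hΩ hKΩ
      refine ⟨ε, hεpos, fun x' hx' => ?_⟩
      have hs₀mem : s₀ ∈ dirSet Ω θ x' := by
        refine ⟨hs₀pos, fun t htmem => ?_⟩
        apply hε
        rw [Metric.mem_thickening_iff]
        refine ⟨x + t • θ, ⟨t, ⟨htmem.1, le_of_lt (lt_of_lt_of_le htmem.2 (le_refl _))⟩, rfl⟩, ?_⟩
        · simpa [dist_add_right] using hx'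
      calc c < s₀ := hcs₀
        _ ≤ deltaDir Ω θ x' := le_csSup (hbdd x') hs₀mem
  exact hopen.measurableSet

variable {n : ℕ}

lemma exists_onb (θ : EuclideanSpace ℝ (Fin (n+1))) (hθ : ‖θ‖ = 1) :
    ∃ b : OrthonormalBasis (Fin (n+1)) ℝ (EuclideanSpace ℝ (Fin (n+1))), b 0 = θ := by
  have hcard : Module.finrank ℝ (EuclideanSpace ℝ (Fin (n+1))) = Fintype.card (Fin (n+1)) := by
    simp [finrank_euclideanSpace]
  have horth : Orthonormal ℝ (({0} : Set (Fin (n+1))).restrict (fun _ => θ)) := by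
    constructor
    · intro i; exact hθ
    · intro i j hij
      exfalso
      exact hij (Subtype.ext (i.2.trans j.2.symm))
  obtain ⟨b, hb⟩ := horth.exists_orthonormalBasis_extension_of_card_eq hcard
  exact ⟨b, hb 0 rfl⟩

noncomputable def coordEquiv (b : OrthonormalBasis (Fin (n+1)) ℝ (EuclideanSpace ℝ (Fin (n+1)))) :
    EuclideanSpace ℝ (Fin (n+1)) ≃ᵐ ℝ × (Fin n → ℝ) :=
  (b.measurableEquiv.trans (MeasurableEquiv.toLp 2 (Fin (n+1) → ℝ)).symm).trans
    (MeasurableEquiv.piFinSuccAbove (fun _ : Fin (n+1) => ℝ) 0)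

variable (b : OrthonormalBasis (Fin (n+1)) ℝ (EuclideanSpace ℝ (Fin (n+1))))

lemma coordEquiv_mp : MeasurePreserving (coordEquiv b) volume volume := by
  have h1 := b.measurePreserving_measurableEquiv
  have h2 := EuclideanSpace.volume_preserving_symm_measurableEquiv_toLp (Fin (n+1))
  have h3 := volume_preserving_piFinSuccAbove (fun _ : Fin (n+1) => ℝ) 0
  exact (h3.comp (h2.comp h1))

lemma coordEquiv_apply (x : EuclideanSpace ℝ (Fin (n+1))) :
    coordEquiv b x = (b.repr x 0, fun j => b.repr x (Fin.succAbove 0 j)) := rfl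

lemma coordEquiv_fst (x : EuclideanSpace ℝ (Fin (n+1))) (θ : EuclideanSpace ℝ (Fin (n+1)))
    (hbθ : b 0 = θ) (t : ℝ) :
    (coordEquiv b (x + t • θ)).1 = (coordEquiv b x).1 + t := by
  simp only [coordEquiv_apply, map_add, _root_.map_smul, ← hbθ, b.repr_self]
  simp [EuclideanSpace.single_apply]

lemma coordEquiv_snd (x : EuclideanSpace ℝ (Fin (n+1))) (θ : EuclideanSpace ℝ (Fin (n+1)))
    (hbθ : b 0 = θ) (t : ℝ) :
    (coordEquiv b (x + t • θ)).2 = (coordEquiv b x).2 := by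
  funext j
  simp only [coordEquiv_apply, map_add, _root_.map_smul, ← hbθ, b.repr_self]
  simp [EuclideanSpace.single_apply, Fin.succ_ne_zero]

noncomputable def projPi : EuclideanSpace ℝ (Fin (n+1)) → (Fin n → ℝ) :=
  fun w j => w (Fin.succAbove 0 j)

noncomputable def liftPi : (Fin n → ℝ) → EuclideanSpace ℝ (Fin (n+1)) :=
  fun y => (WithLp.equiv 2 (Fin (n+1) → ℝ)).symm (Fin.cons 0 y)

lemma projPi_lipschitz : LipschitzWith 1 (projPi (n := n)) := by
  have h1 : LipschitzWith 1 (WithLp.equiv 2 (Fin (n+1) → ℝ)) := PiLp.lipschitzWith_ofLp 2 _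
  have h2 : LipschitzWith 1 (fun (f : Fin (n+1) → ℝ) (j : Fin n) => f (Fin.succAbove 0 j)) := by
    apply LipschitzWith.of_dist_le_mul
    intro f g
    simp only [NNReal.coe_one, one_mul]
    rw [dist_pi_le_iff dist_nonneg]
    intro j
    exact dist_le_pi_dist f g _
  have : projPi (n := n) = (fun (f : Fin (n+1) → ℝ) (j : Fin n) => f (Fin.succAbove 0 j)) ∘
      (WithLp.equiv 2 (Fin (n+1) → ℝ)) := rfl
  rw [this]
  simpa using h2.comp h1

lemma liftPi_lipschitz : ∃ C : ℝ≥0, LipschitzWith C (liftPi (n := n)) := by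
  have h1 : LipschitzWith _ (WithLp.equiv 2 (Fin (n+1) → ℝ)).symm :=
    (PiLp.antilipschitzWith_ofLp 2 (fun _ : Fin (n+1) => ℝ)).to_rightInverse
      (WithLp.equiv 2 (Fin (n+1) → ℝ)).apply_symm_apply
  have h2 : LipschitzWith 1 (fun (y : Fin n → ℝ) => (Fin.cons 0 y : Fin (n+1) → ℝ)) := by
    apply LipschitzWith.of_dist_le_mul
    intro f g
    simp only [NNReal.coe_one, one_mul]
    rw [dist_pi_le_iff dist_nonneg]
    intro i
    refine Fin.cases ?_ ?_ i
    · simpa using dist_nonneg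
    · intro j
      simpa using dist_le_pi_dist f g j
  exact ⟨_, h1.comp h2⟩

lemma liftPi_projPi {w : EuclideanSpace ℝ (Fin (n+1))} (hw : w 0 = 0) :
    liftPi (projPi w) = w := by
  ext i
  refine Fin.cases ?_ ?_ i
  · simpa [liftPi, projPi] using hw.symm
  · intro j
    simp [liftPi, projPi]

lemma hausdorff_pos_iff_volume_proj (Sset : Set (EuclideanSpace ℝ (Fin (n+1))))
    (hS : ∀ w ∈ Sset, w 0 = 0) :
    0 < μH[(n:ℝ)] Sset ↔ 0 < volume (projPi '' Sset) := by
  have hn : (0:ℝ) ≤ (n:ℝ) := Nat.cast_nonneg n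
  have hvol : (μH[(n:ℝ)] : Measure (Fin n → ℝ)) = volume := by
    have := hausdorffMeasure_pi_real (ι := Fin n)
    rwa [Fintype.card_fin] at this
  rw [← hvol]
  obtain ⟨C, hC⟩ := liftPi_lipschitz (n := n)
  have h1 : μH[(n:ℝ)] (projPi '' Sset) ≤ μH[(n:ℝ)] Sset := by
    have := projPi_lipschitz.hausdorffMeasure_image_le hn Sset
    simpa using this
  have h2 : μH[(n:ℝ)] Sset ≤ (C : ℝ≥0∞) ^ (n:ℝ) * μH[(n:ℝ)] (projPi '' Sset) := by
    have himg : liftPi '' (projPi '' Sset) = Sset := by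
      rw [Set.image_image]
      have : ∀ w ∈ Sset, liftPi (projPi w) = w := fun w hw => liftPi_projPi (hS w hw)
      calc (fun w => liftPi (projPi w)) '' Sset = (fun w => w) '' Sset := Set.image_congr this
        _ = Sset := Set.image_id Sset
    calc μH[(n:ℝ)] Sset = μH[(n:ℝ)] (liftPi '' (projPi '' Sset)) := by rw [himg]
      _ ≤ (C : ℝ≥0∞) ^ (n:ℝ) * μH[(n:ℝ)] (projPi '' Sset) :=
        hC.hausdorffMeasure_image_le hn _
  constructor
  · intro h
    rcases eq_or_lt_of_le (zero_le : 0 ≤ μH[(n:ℝ)] (projPi '' Sset)) with heq | hlt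
    · exfalso
      rw [← heq, mul_zero] at h2
      exact absurd (le_antisymm h2 zero_le) (ne_of_gt h)
    · exact hlt
  · intro h
    exact lt_of_lt_of_le h h1

end Stmt16Aux

open Stmt16Aux in
/-- For a nonempty Borel set `A ⊆ ∂_θΩ`, `μ_θ(A) > 0` iff the orthogonal projection
`P_θ(A)` onto the hyperplane orthogonal to `θ` has positive `(d-1)`-dimensional
measure (expressed via the `(d-1)`-dimensional Hausdorff measure). -/
theorem stmt16 {d : ℕ} (Ω : Set (EuclideanSpace ℝ (Fin d)))
    (hΩ : IsOpen Ω) (hb : Bornology.IsBounded Ω)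
    (θ : EuclideanSpace ℝ (Fin d)) (hθ : ‖θ‖ = 1)
    (A : Set (EuclideanSpace ℝ (Fin d))) (hA : A.Nonempty) (hAm : MeasurableSet A)
    (hAsub : A ⊆ {z | z ∈ frontier Ω ∧
      ∃ r > (0 : ℝ), ∀ t ∈ Set.Ioo (0 : ℝ) r, z - t • θ ∈ Ω}) :
    (0 < ∫⁻ x in Ω, A.indicator (fun _ => (1 : ℝ≥0∞)) (PhiDir Ω θ x) ∂volume) ↔
      0 < μH[(d : ℝ) - 1] ((fun x => x - (inner ℝ x θ : ℝ) • θ) '' A) := by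
  match d, Ω, hΩ, hb, θ, hθ, A, hA, hAm, hAsub with
  | 0, Ω, hΩ, hb, θ, hθ, A, hA, hAm, hAsub =>
    exfalso
    have : θ = 0 := by ext i; exact i.elim0
    rw [this, norm_zero] at hθ
    norm_num at hθ
  | (n+1), Ω, hΩ, hb, θ, hθ, A, hA, hAm, hAsub => ?_
  clear hA
  obtain ⟨b, hbθ⟩ := exists_onb θ hθ
  set G := coordEquiv b with hGdef
  -- measurability of the exit map
  have hδm : Measurable (deltaDir Ω θ) := measurable_deltaDir hΩ hb hθ
  have hΦm : Measurable (PhiDir Ω θ) := by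
    have : PhiDir Ω θ = fun x => x + deltaDir Ω θ x • θ := rfl
    rw [this]
    exact measurable_id.add (hδm.smul_const θ)
  have hpre : MeasurableSet (PhiDir Ω θ ⁻¹' A) := hΦm hAm
  set E' : Set (EuclideanSpace ℝ (Fin (n+1))) := PhiDir Ω θ ⁻¹' A ∩ Ω with hE'def
  have hE'm : MeasurableSet E' := hpre.inter hΩ.measurableSet
  -- rewrite the LHS as a volume
  have hLHS : (∫⁻ x in Ω, A.indicator (fun _ => (1 : ℝ≥0∞)) (PhiDir Ω θ x) ∂volume)
      = volume E' := by
    have key : ∀ x, A.indicator (fun _ => (1:ℝ≥0∞)) (PhiDir Ω θ x)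
        = (PhiDir Ω θ ⁻¹' A).indicator (fun _ => (1:ℝ≥0∞)) x := by
      intro x
      by_cases h : PhiDir Ω θ x ∈ A <;>
        simp [Set.indicator_apply, h, Set.mem_preimage]
    simp_rw [key]
    rw [lintegral_indicator hpre, setLIntegral_one, Measure.restrict_apply hpre]
  rw [hLHS]
  -- the coordinate image of E'
  set W : Set (ℝ × (Fin n → ℝ)) := G '' E' with hWdef
  have hWm : MeasurableSet W := G.measurableSet_image.2 hE'm
  have hvolE : volume E' = (volume : Measure (ℝ × (Fin n → ℝ))) W := by
    have : E' = G ⁻¹' W := (Set.preimage_image_eq E' G.injective).symm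
    rw [this]
    exact (coordEquiv_mp b).measure_preimage hWm.nullMeasurableSet
  -- slice function
  set m : (Fin n → ℝ) → ℝ≥0∞ := fun y => volume ((fun t => (t, y)) ⁻¹' W) with hmdef
  have hm_meas : Measurable m := measurable_measure_prodMk_right hWm
  have hprod : (volume : Measure (ℝ × (Fin n → ℝ))) W = ∫⁻ y, m y ∂volume := by
    rw [Measure.volume_eq_prod, Measure.prod_apply_symm hWm]
  -- the projected set in coordinates
  set Tset : Set (Fin n → ℝ) := (fun z => (G z).2) '' A with hTdef
  have hT1 : ∀ y, m y ≠ 0 → y ∈ Tset := by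
    intro y hy
    have hne : ((fun t => (t, y)) ⁻¹' W).Nonempty := by
      by_contra h
      rw [Set.not_nonempty_iff_eq_empty] at h
      apply hy
      rw [hmdef]
      simp only [h, measure_empty]
    obtain ⟨t, ht⟩ := hne
    obtain ⟨x, hxE, hGx⟩ := ht
    have hy2 : y = (G x).2 := by rw [hGx]
    have hsnd : (G (PhiDir Ω θ x)).2 = (G x).2 := by
      have : PhiDir Ω θ x = x + deltaDir Ω θ x • θ := rfl
      rw [this, hGdef]
      exact coordEquiv_snd b x θ hbθ _
    exact ⟨PhiDir Ω θ x, hxE.1, hsnd.trans hy2.symm⟩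
  have hT2 : ∀ y ∈ Tset, m y ≠ 0 := by
    rintro y ⟨z, hzA, hzy⟩
    obtain ⟨hzfr, r, hr, hseg⟩ := hAsub hzA
    have hsub : Ioo ((G z).1 - r) ((G z).1) ⊆ (fun t => (t, y)) ⁻¹' W := by
      intro t' ht'
      set u := (G z).1 - t' with hudef
      have hu : u ∈ Ioo (0:ℝ) r := ⟨by simp only [hudef]; linarith [ht'.2],
        by simp only [hudef]; linarith [ht'.1]⟩
      have hxΩ : z - u • θ ∈ Ω := hseg u hu
      have hΦ : PhiDir Ω θ (z - u • θ) = z := (PhiDir_sub_smul hΩ hzfr hseg hu).2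
      have hxE : z - u • θ ∈ E' := ⟨by rw [Set.mem_preimage, hΦ]; exact hzA, hxΩ⟩
      have hrw : z - u • θ = z + (-u) • θ := by rw [neg_smul, sub_eq_add_neg]
      have hfst : (G (z - u • θ)).1 = t' := by
        rw [hrw, hGdef, coordEquiv_fst b z θ hbθ]
        simp only [hudef]; ring
      have hzy' : (G z).2 = y := hzy
      have hsnd : (G (z - u • θ)).2 = y := by
        rw [hrw, hGdef, coordEquiv_snd b z θ hbθ, ← hGdef, hzy']
      refine ⟨z - u • θ, hxE, ?_⟩
      exact Prod.ext hfst hsnd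
    have hle : volume (Ioo ((G z).1 - r) ((G z).1)) ≤ m y := measure_mono hsub
    rw [Real.volume_Ioo] at hle
    have hpos : (0:ℝ≥0∞) < ENNReal.ofReal ((G z).1 - ((G z).1 - r)) := by
      rw [ENNReal.ofReal_pos]; linarith
    exact ne_of_gt (lt_of_lt_of_le hpos hle)
  have hTeq : {y | m y ≠ 0} = Tset :=
    Set.Subset.antisymm (fun y hy => hT1 y hy) (fun y hy => hT2 y hy)
  -- LHS positivity in terms of Tset
  have hLHS2 : (0 < volume E') ↔ 0 < volume Tset := by
    have hzero : (∫⁻ y, m y) = 0 ↔ volume Tset = 0 := by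
      rw [lintegral_eq_zero_iff hm_meas, Filter.EventuallyEq, ae_iff]
      simp only [Pi.zero_apply]
      have : {y | ¬ m y = 0} = Tset := hTeq
      rw [this]
    rw [hvolE, hprod, pos_iff_ne_zero, pos_iff_ne_zero]
    exact not_congr hzero
  rw [hLHS2]
  -- now the RHS
  have hcast : ((n+1:ℕ):ℝ) - 1 = (n:ℝ) := by push_cast; ring
  rw [hcast]
  set PA : Set (EuclideanSpace ℝ (Fin (n+1))) := (fun x => x - (inner ℝ x θ : ℝ) • θ) '' A
    with hPAdef
  set S2 : Set (EuclideanSpace ℝ (Fin (n+1))) := ⇑b.repr '' PA with hS2def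
  have hiso : μH[(n:ℝ)] S2 = μH[(n:ℝ)] PA :=
    b.repr.toIsometryEquiv.hausdorffMeasure_image (n:ℝ) PA
  have hreprθ : b.repr θ = EuclideanSpace.single 0 1 := by rw [← hbθ]; exact b.repr_self 0
  have hS2zero : ∀ w ∈ S2, w 0 = 0 := by
    rintro w ⟨_, ⟨z, hzA, rfl⟩, rfl⟩
    rw [map_sub, _root_.map_smul, hreprθ]
    have h1 : b.repr z 0 = (inner ℝ θ z : ℝ) := by
      rw [b.repr_apply_apply, hbθ]
    simp [PiLp.sub_apply, PiLp.smul_apply, EuclideanSpace.single_apply, h1,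
      real_inner_comm z θ]
  have hproj : projPi '' S2 = Tset := by
    rw [hS2def, hPAdef, Set.image_image, Set.image_image, hTdef]
    apply Set.image_congr'
    intro z
    funext j
    simp only [projPi, map_sub, _root_.map_smul, hreprθ, hGdef, coordEquiv_apply]
    simp only [PiLp.sub_apply, PiLp.smul_apply, EuclideanSpace.single_apply, smul_eq_mul]
    rw [if_neg (by simpa using (Fin.succ_ne_zero j))]
    ring
  rw [← hiso, hausdorff_pos_iff_volume_proj S2 hS2zero, hproj]
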